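/- arXiv:2004.12309 — 2 statements merged into one kernel-verified Lean document; each statement's English description precedes it below -/
import Mathlib

section
/- Let μ : [k₀, ∞) → ℝ be nonnegative and non-increasing, and suppose there exist constants M > 0, α > 0, β > 1 such that μ(h) ≤ (M/(h-k))^α · μ(k)^β for all h > k ≥ k₀. Then with d = M · 2^(β/(β-1)) · μ(k₀)^((β-1)/α), one has μ(h) = 0 for all h ≥ k₀ + d. -/
open Real Filter

theorem stmt_9 (k₀ M α β : ℝ) (μ : ℝ → ℝ)
    (hM : 0 < M) (hα : 0 < α) (hβ : 1 < β)
    (hnonneg : ∀ t, k₀ ≤ t → 0 ≤ μ t)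
    (hmono : ∀ s t, k₀ ≤ s → s ≤ t → μ t ≤ μ s)
    (hgrowth : ∀ h k, k₀ ≤ k → k < h → μ h ≤ (M / (h - k)) ^ α * μ k ^ β) :
    ∀ h : ℝ, k₀ + M * (2 : ℝ) ^ (β / (β - 1)) * μ k₀ ^ ((β - 1) / α) ≤ h → μ h = 0 := by
  intro h hh
  set μ₀ := μ k₀ with hμ₀def
  have hμ₀0 : 0 ≤ μ₀ := hnonneg k₀ le_rfl
  have hβ1 : (0:ℝ) < β - 1 := by linarith
  have h2 : (0:ℝ) < 2 := by norm_num
  rcases eq_or_lt_of_le hμ₀0 with hz | hμ₀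
  · -- μ₀ = 0 : then d = 0 and μ h ≤ μ₀ = 0
    have hd0 : μ₀ ^ ((β - 1) / α) = 0 := by
      rw [← hz]
      exact Real.zero_rpow (by positivity)
    rw [hd0, mul_zero, add_zero] at hh
    have h1 := hmono k₀ h le_rfl hh
    have h2' := hnonneg h hh
    rw [← hμ₀def, ← hz] at h1
    linarith
  · set d := M * (2:ℝ) ^ (β / (β - 1)) * μ₀ ^ ((β - 1) / α) with hddef
    have hd : 0 < d := by
      apply mul_pos (mul_pos hM (Real.rpow_pos_of_pos h2 _))
      exact Real.rpow_pos_of_pos hμ₀ _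
    -- key iteration bound
    have key : ∀ n : ℕ, μ (k₀ + d - d / 2 ^ n) ≤ μ₀ * (2:ℝ) ^ (-((n:ℝ) * α) / (β - 1)) := by
      intro n
      induction n with
      | zero =>
        simp [Real.rpow_zero]
        exact le_rfl
      | succ n ih =>
        have hpow : (0:ℝ) < 2 ^ n := by positivity
        have hpow1 : (0:ℝ) < 2 ^ (n+1) := by positivity
        set kn := k₀ + d - d / 2 ^ n with hkndef
        set kn1 := k₀ + d - d / 2 ^ (n+1) with hkn1def
        have hknk₀ : k₀ ≤ kn := by
          have : d / 2 ^ n ≤ d := by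
            rw [div_le_iff₀ hpow]
            nlinarith [one_le_pow₀ (by norm_num : (1:ℝ) ≤ 2) (n := n)]
          simp only [hkndef]; linarith
        have hlt : kn < kn1 := by
          have : d / 2 ^ (n+1) < d / 2 ^ n := by
            apply div_lt_div_of_pos_left hd hpow
            rw [pow_succ]; nlinarith
          simp only [hkndef, hkn1def]; linarith
        have hgap : kn1 - kn = d / 2 ^ (n+1) := by
          simp only [hkndef, hkn1def, pow_succ]
          field_simp
          ring
        have step := hgrowth kn1 kn hknk₀ hlt
        rw [hgap] at step
        have hμkn : 0 ≤ μ kn := hnonneg kn hknk₀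
        have hB : (0:ℝ) < μ₀ * (2:ℝ) ^ (-((n:ℝ) * α) / (β - 1)) :=
          mul_pos hμ₀ (Real.rpow_pos_of_pos h2 _)
        have step2 : μ kn1 ≤ (M / (d / 2 ^ (n+1))) ^ α *
            (μ₀ * (2:ℝ) ^ (-((n:ℝ) * α) / (β - 1))) ^ β := by
          refine step.trans ?_
          apply mul_le_mul_of_nonneg_left _ (Real.rpow_nonneg (by positivity) _)
          exact Real.rpow_le_rpow hμkn ih (by linarith)
        -- the algebraic identity
        have hA : (0:ℝ) < M / (d / 2 ^ (n+1)) := by positivity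
        have hident : (M / (d / 2 ^ (n+1))) ^ α *
            (μ₀ * (2:ℝ) ^ (-((n:ℝ) * α) / (β - 1))) ^ β
            = μ₀ * (2:ℝ) ^ (-(((n:ℝ)+1) * α) / (β - 1)) := by
          have hL : (0:ℝ) < (M / (d / 2 ^ (n+1))) ^ α *
              (μ₀ * (2:ℝ) ^ (-((n:ℝ) * α) / (β - 1))) ^ β := by
            apply mul_pos (Real.rpow_pos_of_pos hA _) (Real.rpow_pos_of_pos hB _)
          have hR : (0:ℝ) < μ₀ * (2:ℝ) ^ (-(((n:ℝ)+1) * α) / (β - 1)) :=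
            mul_pos hμ₀ (Real.rpow_pos_of_pos h2 _)
          have hlogd : Real.log d = Real.log M + (β / (β - 1)) * Real.log 2
              + ((β - 1) / α) * Real.log μ₀ := by
            rw [hddef, Real.log_mul (by positivity) (by positivity),
              Real.log_mul (by positivity) (by positivity),
              Real.log_rpow h2, Real.log_rpow hμ₀]
            all_goals ring
          have hlog : Real.log ((M / (d / 2 ^ (n+1))) ^ α *
              (μ₀ * (2:ℝ) ^ (-((n:ℝ) * α) / (β - 1))) ^ β)
              = Real.log (μ₀ * (2:ℝ) ^ (-(((n:ℝ)+1) * α) / (β - 1))) := by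
            rw [Real.log_mul (by positivity) (by positivity),
              Real.log_rpow hA, Real.log_rpow hB,
              Real.log_div (by positivity) (by positivity),
              Real.log_div (by positivity) (by positivity),
              Real.log_pow, hlogd,
              Real.log_mul (by positivity) (by positivity),
              Real.log_mul (by positivity) (by positivity),
              Real.log_rpow h2, Real.log_rpow h2]
            push_cast
            field_simp
            all_goals ring
          calc (M / (d / 2 ^ (n+1))) ^ α * (μ₀ * (2:ℝ) ^ (-((n:ℝ) * α) / (β - 1))) ^ β
              = Real.exp (Real.log ((M / (d / 2 ^ (n+1))) ^ α *
                  (μ₀ * (2:ℝ) ^ (-((n:ℝ) * α) / (β - 1))) ^ β)) := (Real.exp_log hL).symm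
            _ = Real.exp (Real.log (μ₀ * (2:ℝ) ^ (-(((n:ℝ)+1) * α) / (β - 1)))) := by rw [hlog]
            _ = μ₀ * (2:ℝ) ^ (-(((n:ℝ)+1) * α) / (β - 1)) := Real.exp_log hR
        rw [hident] at step2
        convert step2 using 3
        push_cast
        ring
    -- pass to the limit
    set r : ℝ := (2:ℝ) ^ (-(α / (β - 1))) with hrdef
    have hr0 : 0 ≤ r := Real.rpow_nonneg (by norm_num) _
    have hr1 : r < 1 := Real.rpow_lt_one_of_one_lt_of_neg (by norm_num) (by
      have : 0 < α / (β - 1) := by positivity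
      linarith)
    have hrn : ∀ n : ℕ, μ₀ * (2:ℝ) ^ (-((n:ℝ) * α) / (β - 1)) = μ₀ * r ^ n := by
      intro n
      congr 1
      rw [hrdef, ← Real.rpow_natCast ((2:ℝ) ^ (-(α / (β - 1)))) n, ← Real.rpow_mul (by norm_num)]
      congr 1
      ring
    have hbound : ∀ n : ℕ, μ (k₀ + d) ≤ μ₀ * r ^ n := by
      intro n
      rw [← hrn]
      refine le_trans ?_ (key n)
      apply hmono
      · have hdn : 0 ≤ d / 2 ^ n := by positivity
        have h1le : d / 2 ^ n ≤ d := by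
          rw [div_le_iff₀ (by positivity)]
          nlinarith [one_le_pow₀ (by norm_num : (1:ℝ) ≤ 2) (n := n)]
        linarith
      · have hdn : 0 ≤ d / 2 ^ n := by positivity
        linarith
    have htend : Tendsto (fun n : ℕ => μ₀ * r ^ n) atTop (nhds 0) := by
      have := tendsto_pow_atTop_nhds_zero_of_lt_one hr0 hr1
      simpa using this.const_mul μ₀
    have hle0 : μ (k₀ + d) ≤ 0 := ge_of_tendsto htend (Eventually.of_forall hbound)
    have h1 := hmono (k₀ + d) h (by linarith) hh
    have h2' := hnonneg h (by linarith)
    linarith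
end

section
/- Under the hypotheses of De Giorgi's iteration lemma, defining k_s = k₀ + d - d/2^s and r = 2^(α/(β-1)), the induction estimate μ(k_{s+1}) ≤ (M^α 2^{(s+1)α}/d^α) μ(k_s)^β combined with μ(k_s) ≤ μ(k₀)/r^s implies μ(k_{s+1}) ≤ μ(k₀)/r^{s+1}. -/
theorem stmt_10 (k₀ M α β d r : ℝ) (μ : ℝ → ℝ) (k : ℕ → ℝ) (s : ℕ)
    (hM : 0 < M) (hα : 0 < α) (hβ : 1 < β)
    (hnonneg : ∀ t, k₀ ≤ t → 0 ≤ μ t)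
    (hmono : ∀ x y, k₀ ≤ x → x ≤ y → μ y ≤ μ x)
    (hgrowth : ∀ h k', k₀ ≤ k' → k' < h → μ h ≤ (M / (h - k')) ^ α * μ k' ^ β)
    (hd : d = M * (2 : ℝ) ^ (β / (β - 1)) * μ k₀ ^ ((β - 1) / α))
    (hr : r = (2 : ℝ) ^ (α / (β - 1)))
    (hk : ∀ n : ℕ, k n = k₀ + d - d / 2 ^ n)
    (hrec : μ (k (s + 1)) ≤ M ^ α * (2 : ℝ) ^ (((s : ℝ) + 1) * α) / d ^ α * μ (k s) ^ β)
    (hind : μ (k s) ≤ μ k₀ / r ^ s) :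
    μ (k (s + 1)) ≤ μ k₀ / r ^ (s + 1) := by
  have hμ0 : 0 ≤ μ k₀ := hnonneg k₀ le_rfl
  have hβ1 : (0:ℝ) < β - 1 := by linarith
  have hrpos : (0:ℝ) < r := by rw [hr]; positivity
  rcases eq_or_lt_of_le hμ0 with h0 | hpos
  · -- degenerate case μ k₀ = 0
    have hd0 : d = 0 := by
      rw [hd, ← h0, Real.zero_rpow (by positivity)]; ring
    have hks : k s = k₀ := by rw [hk, hd0]; ring
    have h1 : μ (k (s + 1)) ≤ 0 := by
      have hμs : μ (k s) ≤ 0 := by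
        have hz : μ k₀ / r ^ s = 0 := by rw [← h0]; simp
        linarith [hind]
      have hμs0 : μ (k s) = 0 := le_antisymm hμs (by rw [hks]; exact hnonneg k₀ le_rfl)
      calc μ (k (s+1)) ≤ M ^ α * (2 : ℝ) ^ (((s : ℝ) + 1) * α) / d ^ α * μ (k s) ^ β := hrec
        _ = 0 := by rw [hμs0, Real.zero_rpow (by positivity)]; ring
    calc μ (k (s+1)) ≤ 0 := h1
      _ ≤ μ k₀ / r ^ (s+1) := by rw [← h0]; simp
  · -- main case
    have hdpos : 0 < d := by rw [hd]; positivity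
    have hksnn : 0 ≤ μ (k s) := by
      apply hnonneg
      rw [hk]
      have h2s : (1:ℝ) ≤ 2 ^ s := one_le_pow₀ (by norm_num)
      have h2s' : (0:ℝ) < 2 ^ s := by positivity
      have : d / 2 ^ s ≤ d := by
        rw [div_le_iff₀ h2s']
        nlinarith
      linarith
    have hdα : d ^ α = M ^ α * (2:ℝ) ^ (β/(β-1)*α) * μ k₀ ^ (β-1) := by
      rw [hd, Real.mul_rpow (by positivity) (Real.rpow_nonneg hμ0 _),
        Real.mul_rpow hM.le (Real.rpow_nonneg (by norm_num) _),
        ← Real.rpow_mul (by norm_num : (0:ℝ) ≤ 2),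
        ← Real.rpow_mul hμ0, div_mul_cancel₀ _ hα.ne']
    have hrs : ∀ n : ℕ, r ^ n = (2:ℝ) ^ (α/(β-1) * n) := fun n => by
      rw [hr, ← Real.rpow_natCast ((2:ℝ) ^ (α/(β-1))) n,
        ← Real.rpow_mul (by norm_num : (0:ℝ) ≤ 2)]
    have hμsb : μ (k s) ^ β ≤ (μ k₀ / r ^ s) ^ β :=
      Real.rpow_le_rpow hksnn hind (by linarith)
    have hcoef : 0 ≤ M ^ α * (2 : ℝ) ^ (((s : ℝ) + 1) * α) / d ^ α := by positivity
    have key : M ^ α * (2 : ℝ) ^ (((s : ℝ) + 1) * α) / d ^ α * (μ k₀ / r ^ s) ^ β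
        = μ k₀ / r ^ (s + 1) := by
      rw [hdα, hrs s, hrs (s+1),
        Real.div_rpow hpos.le (Real.rpow_nonneg (by norm_num) _),
        ← Real.rpow_mul (by norm_num : (0:ℝ) ≤ 2)]
      rw [div_mul_div_comm, div_eq_div_iff (by positivity) (by positivity)]
      push_cast
      rw [show M ^ α * (2:ℝ) ^ (((s:ℝ)+1)*α) * μ k₀ ^ β * (2:ℝ) ^ (α/(β-1) * ((s:ℝ) + 1))
          = M ^ α * (μ k₀ ^ β * ((2:ℝ) ^ (((s:ℝ)+1)*α) * (2:ℝ) ^ (α/(β-1) * ((s:ℝ) + 1)))) from by ring,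
        show μ k₀ * (M ^ α * (2:ℝ) ^ (β/(β-1)*α) * μ k₀ ^ (β-1) * (2:ℝ) ^ (α/(β-1)*(s:ℝ)*β))
          = M ^ α * ((μ k₀ * μ k₀ ^ (β-1)) * ((2:ℝ) ^ (β/(β-1)*α) * (2:ℝ) ^ (α/(β-1)*(s:ℝ)*β))) from by ring,
        ← Real.rpow_add (by norm_num : (0:ℝ) < 2), ← Real.rpow_add (by norm_num : (0:ℝ) < 2)]
      nth_rewrite 2 [show μ k₀ = μ k₀ ^ (1:ℝ) from (Real.rpow_one _).symm]
      rw [← Real.rpow_add hpos]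
      congr 2
      · ring
      · field_simp
        ring
    calc μ (k (s+1)) ≤ M ^ α * (2 : ℝ) ^ (((s : ℝ) + 1) * α) / d ^ α * μ (k s) ^ β := hrec
      _ ≤ M ^ α * (2 : ℝ) ^ (((s : ℝ) + 1) * α) / d ^ α * (μ k₀ / r ^ s) ^ β :=
        mul_le_mul_of_nonneg_left hμsb hcoef
      _ = μ k₀ / r ^ (s + 1) := key
end
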